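/- arXiv:2411.04240 — 5 statements merged into one kernel-verified Lean document; each statement's English description precedes it below -/
import Mathlib

section
/- For any n×n complex matrices A and B, exp(A+B) = exp(A) + ∫₀¹ exp((1−x)A) · B · exp(x(A+B)) dx, where the integral is the (Bochner) integral of the matrix-valued integrand over [0,1]. -/
open scoped Matrix.Norms.L2Operator

/-- Variation-of-parameters formula for the matrix exponential:
`exp(A+B) = exp(A) + ∫₀¹ exp((1−x)A) · B · exp(x(A+B)) dx`. -/
theorem variation_of_parameters {n : ℕ} (A B : Matrix (Fin n) (Fin n) ℂ) :
    NormedSpace.exp (A + B) =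
      NormedSpace.exp A +
        ∫ x in (0:ℝ)..1,
          NormedSpace.exp (((1 - x : ℝ) : ℂ) • A) * B *
            NormedSpace.exp ((x : ℂ) • (A + B)) := by
  have e1 : ∀ (M : Matrix (Fin n) (Fin n) ℂ) (t : ℝ),
      NormedSpace.exp ((t : ℂ) • M) = NormedSpace.exp (t • M) := by
    intro M t
    rw [Complex.coe_smul]
  simp only [e1]
  have key : ∀ x : ℝ, HasDerivAt
      (fun t : ℝ => NormedSpace.exp ((1 - t) • A) *
        NormedSpace.exp (t • (A + B)))
      (NormedSpace.exp ((1 - x) • A) * B *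
        NormedSpace.exp (x • (A + B))) x := by
    intro x
    have hinner : HasDerivAt (fun t : ℝ => 1 - t) (-1 : ℝ) x := by
      simpa using ((hasDerivAt_id x).const_sub (1 : ℝ))
    have hu : HasDerivAt (fun t : ℝ => NormedSpace.exp ((1 - t) • A))
        ((-1 : ℝ) • (NormedSpace.exp ((1 - x) • A) * A)) x :=
      (hasDerivAt_exp_smul_const (𝕂 := ℝ) A (1 - x)).scomp x hinner
    have hv : HasDerivAt (fun t : ℝ => NormedSpace.exp (t • (A + B)))
        ((A + B) * NormedSpace.exp (x • (A + B))) x :=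
      hasDerivAt_exp_smul_const' (𝕂 := ℝ) (A + B) x
    have hprod : HasDerivAt (fun t : ℝ => NormedSpace.exp ((1 - t) • A) *
        NormedSpace.exp (t • (A + B))) _ x := hu.mul hv
    convert hprod using 1
    simp only [neg_one_smul, add_mul, mul_add, neg_mul, mul_assoc]
    abel
  have hcont : Continuous fun x : ℝ =>
      NormedSpace.exp ((1 - x) • A) * B * NormedSpace.exp (x • (A + B)) := by
    have hexp : Continuous (NormedSpace.exp : Matrix (Fin n) (Fin n) ℂ → _) :=
      continuous_iff_continuousAt.2 fun y => (NormedSpace.exp_analytic (𝕂 := ℂ) y).continuousAt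
    apply Continuous.mul
    · exact (hexp.comp
        ((continuous_const.sub continuous_id).smul continuous_const)).mul continuous_const
    · exact hexp.comp (continuous_id.smul continuous_const)
  have hint := intervalIntegral.integral_eq_sub_of_hasDerivAt
    (fun x _ => key x) (hcont.intervalIntegrable 0 1)
  rw [hint]
  simp [NormedSpace.exp_zero]
end

section
/- If t > 0 and 2tλ < 1, then the qDRIFT map 𝓔_t is injective as a linear map on n×n complex matrices (i.e., it has trivial kernel, and hence its matrix logarithm exists). -/
open scoped Matrix.Norms.L2Operator

open NormedSpace in
lemma norm_exp_sub_one_le_of_skewAdjoint {n : ℕ} [NeZero n]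
    {A : Matrix (Fin n) (Fin n) ℂ} (hA : star A = -A) :
    ‖exp A - 1‖ ≤ ‖A‖ := by
  have hskew : ∀ s : ℝ, (s • A) ∈ skewAdjoint (Matrix (Fin n) (Fin n) ℂ) := by
    intro s
    rw [skewAdjoint.mem_iff, star_smul, star_trivial, hA, smul_neg]
  have key : ∀ s : ℝ, HasDerivAt (fun u : ℝ => exp (u • A)) (exp (s • A) * A) s := by
    intro s
    have := hasDerivAt_exp_smul_const (𝕂 := ℝ) A s
    exact this
  have bound : ∀ s ∈ Set.Icc (0:ℝ) 1, ‖exp (s • A) * A‖ ≤ ‖A‖ := by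
    intro s _
    calc ‖exp (s • A) * A‖ ≤ ‖exp (s • A)‖ * ‖A‖ := norm_mul_le _ _
    _ = ‖A‖ := by
        rw [CStarRing.norm_of_mem_unitary (by letI : NormedAlgebra ℚ (Matrix (Fin n) (Fin n) ℂ) := .restrictScalars ℚ ℂ _; exact exp_mem_unitary_of_mem_skewAdjoint (hskew s)),
          one_mul]
  have := Convex.norm_image_sub_le_of_norm_hasDerivWithin_le
    (f := fun u : ℝ => exp (u • A)) (f' := fun s : ℝ => exp (s • A) * A)
    (fun s _ => (key s).hasDerivWithinAt) bound (convex_Icc 0 1)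
    (Set.mem_Icc.mpr ⟨le_refl 0, zero_le_one⟩) (Set.mem_Icc.mpr ⟨zero_le_one, le_refl 1⟩)
  simpa using this

/-- The qDRIFT map `𝓔_t(B) = ∑ⱼ pⱼ exp(−iλt Hⱼ) B exp(iλt Hⱼ)` with `pⱼ = hⱼ/λ`,
`λ = ∑ⱼ hⱼ`. -/
noncomputable def qDrift {n L : ℕ} (H : Fin L → Matrix (Fin n) (Fin n) ℂ)
    (h : Fin L → ℝ) (t : ℝ) (B : Matrix (Fin n) (Fin n) ℂ) : Matrix (Fin n) (Fin n) ℂ :=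
  ∑ j, (((h j / ∑ k, h k : ℝ)) : ℂ) •
    (NormedSpace.exp ((-Complex.I * ((∑ k, h k : ℝ) : ℂ) * (t : ℂ)) • H j) * B *
      NormedSpace.exp ((Complex.I * ((∑ k, h k : ℝ) : ℂ) * (t : ℂ)) • H j))

open NormedSpace in
/-- If `t > 0` and `2tλ < 1`, the qDRIFT map is injective on n×n complex matrices
(it has trivial kernel, hence its matrix logarithm exists). -/
theorem qDrift_injective {n L : ℕ} (hn : 1 ≤ n) (hL : 1 ≤ L)
    (H : Fin L → Matrix (Fin n) (Fin n) ℂ)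
    (hHerm : ∀ j, (H j).IsHermitian) (hHnorm : ∀ j, ‖H j‖ ≤ 1)
    (h : Fin L → ℝ) (hh : ∀ j, 0 < h j)
    (t : ℝ) (ht : 0 < t) (hts : 2 * t * (∑ j, h j) < 1) :
    Function.Injective (qDrift H h t) := by
  haveI : NeZero n := ⟨by omega⟩
  set lam : ℝ := ∑ k, h k with hlam
  have hLne : (Finset.univ : Finset (Fin L)).Nonempty := ⟨⟨0, by omega⟩, Finset.mem_univ _⟩
  have hlampos : 0 < lam := Finset.sum_pos (fun j _ => hh j) hLne
  set c₁ : ℂ := -Complex.I * (lam : ℂ) * (t : ℂ) with hc₁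
  set c₂ : ℂ := Complex.I * (lam : ℂ) * (t : ℂ) with hc₂
  have hskew : ∀ (c : ℂ), (starRingEnd ℂ) c = -c → ∀ j,
      star (c • H j) = -(c • H j) := by
    intro c hc j
    rw [Matrix.star_eq_conjTranspose, Matrix.conjTranspose_smul, (hHerm j).eq,
      (by rfl : star c = (starRingEnd ℂ) c), hc, neg_smul]
  have key : ∀ (c : ℂ), (starRingEnd ℂ) c = -c → ‖c‖ = lam * t → ∀ j,
      ‖exp (c • H j) - 1‖ ≤ lam * t ∧ ‖exp (c • H j)‖ = 1 := by
    intro c hc hnc j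
    constructor
    · calc ‖exp (c • H j) - 1‖ ≤ ‖c • H j‖ := norm_exp_sub_one_le_of_skewAdjoint (hskew c hc j)
      _ = ‖c‖ * ‖H j‖ := norm_smul _ _
      _ ≤ (lam * t) * 1 := by rw [hnc]; exact mul_le_mul_of_nonneg_left (hHnorm j) (by positivity)
      _ = lam * t := mul_one _
    · exact CStarRing.norm_of_mem_unitary
        (by letI : NormedAlgebra ℚ (Matrix (Fin n) (Fin n) ℂ) := .restrictScalars ℚ ℂ _; exact exp_mem_unitary_of_mem_skewAdjoint (skewAdjoint.mem_iff.mpr (hskew c hc j)))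
  have hU := key c₁ (by simp [hc₁]) (by simp [hc₁, norm_mul, abs_of_pos hlampos, abs_of_pos ht])
  have hV := key c₂ (by simp [hc₂]) (by simp [hc₂, norm_mul, abs_of_pos hlampos, abs_of_pos ht])
  -- per-term estimate
  set U : Fin L → Matrix (Fin n) (Fin n) ℂ := fun j => exp (c₁ • H j) with hUdef
  set V : Fin L → Matrix (Fin n) (Fin n) ℂ := fun j => exp (c₂ • H j) with hVdef
  have hterm : ∀ (B : Matrix (Fin n) (Fin n) ℂ) (j : Fin L),
      ‖B - U j * B * V j‖ ≤ 2 * (lam * t) * ‖B‖ := by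
    intro B j
    have hdecomp : B - U j * B * V j = B * (1 - V j) + (1 - U j) * (B * V j) := by
      noncomm_ring
    rw [hdecomp]
    calc ‖B * (1 - V j) + (1 - U j) * (B * V j)‖
        ≤ ‖B * (1 - V j)‖ + ‖(1 - U j) * (B * V j)‖ := norm_add_le _ _
      _ ≤ ‖B‖ * ‖1 - V j‖ + ‖1 - U j‖ * (‖B‖ * ‖V j‖) := by
          gcongr
          · exact norm_mul_le _ _
          · exact le_trans (norm_mul_le _ _) (by gcongr; exact norm_mul_le _ _)
      _ ≤ ‖B‖ * (lam * t) + (lam * t) * (‖B‖ * 1) := by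
          gcongr
          · rw [norm_sub_rev]; exact (hV j).1
          · rw [norm_sub_rev]; exact (hU j).1
          · exact le_of_eq (hV j).2
      _ = 2 * (lam * t) * ‖B‖ := by ring
  -- linearity + kernel
  intro B₁ B₂ hB
  by_contra hne
  set B : Matrix (Fin n) (Fin n) ℂ := B₁ - B₂ with hBdef
  have hBne : B ≠ 0 := sub_ne_zero.mpr hne
  have hq : qDrift H h t B = 0 := by
    have hlin : qDrift H h t B = qDrift H h t B₁ - qDrift H h t B₂ := by
      simp only [qDrift, hBdef, mul_sub, sub_mul, smul_sub, Finset.sum_sub_distrib]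
    rw [hlin, hB, sub_self]
  have hsum1 : ∑ j, ((h j / lam : ℝ) : ℂ) = 1 := by
    rw [← Complex.ofReal_sum, ← Finset.sum_div, ← hlam, div_self (ne_of_gt hlampos)]
    simp
  have hBrep : B = ∑ j, ((h j / lam : ℝ) : ℂ) • (B - U j * B * V j) := by
    have : B = (∑ j, ((h j / lam : ℝ) : ℂ)) • B := by rw [hsum1, one_smul]
    calc B = (∑ j, ((h j / lam : ℝ) : ℂ)) • B - qDrift H h t B := by
            rw [hq, sub_zero, hsum1, one_smul]
      _ = ∑ j, ((h j / lam : ℝ) : ℂ) • (B - U j * B * V j) := by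
            rw [qDrift, Finset.sum_smul, ← Finset.sum_sub_distrib]
            refine Finset.sum_congr rfl fun j _ => ?_
            simp only [hBdef, ← hlam, ← hc₁, ← hc₂, hUdef, hVdef, smul_sub]
  have hnormB : ‖B‖ ≤ 2 * (lam * t) * ‖B‖ := by
    calc ‖B‖ = ‖∑ j, ((h j / lam : ℝ) : ℂ) • (B - U j * B * V j)‖ := by rw [← hBrep]
      _ ≤ ∑ j, ‖((h j / lam : ℝ) : ℂ) • (B - U j * B * V j)‖ := norm_sum_le _ _
      _ ≤ ∑ j, (h j / lam) * (2 * (lam * t) * ‖B‖) := by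
          refine Finset.sum_le_sum fun j _ => ?_
          rw [norm_smul, Complex.norm_real, Real.norm_eq_abs,
            abs_of_pos (div_pos (hh j) hlampos)]
          exact mul_le_mul_of_nonneg_left (hterm B j) (le_of_lt (div_pos (hh j) hlampos))
      _ = (∑ j, h j / lam) * (2 * (lam * t) * ‖B‖) := (Finset.sum_mul _ _ _).symm
      _ = 2 * (lam * t) * ‖B‖ := by
          rw [← Finset.sum_div, ← hlam, div_self (ne_of_gt hlampos), one_mul]
  have hBpos : 0 < ‖B‖ := norm_pos_iff.mpr hBne
  nlinarith [hnormB, hBpos, hts]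
end

section
/- For every t ≥ 0 and every n×n complex matrix ρ, ‖𝓔_t(ρ) − exp(−iHt) ρ exp(iHt)‖ ≤ 4(λt)² e^{2λt} ‖ρ‖. In particular the qDRIFT map agrees with the exact Hamiltonian conjugation to first order in t, with second-order error. -/
open scoped Matrix.Norms.L2Operator Nat

-- step 1: real series lemma
lemma tsum_pow_div_factorial_add_two (a : ℝ) :
    ∑' n : ℕ, a ^ (n + 2) / (n + 2)! = Real.exp a - 1 - a := by
  have hs : Summable fun n : ℕ => a ^ n / n ! := Real.summable_pow_div_factorial a
  have h0 : Real.exp a = ∑' n : ℕ, a ^ n / n ! := by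
    rw [Real.exp_eq_exp_ℝ, NormedSpace.exp_eq_tsum_div]
  rw [Summable.tsum_eq_zero_add hs] at h0
  rw [Summable.tsum_eq_zero_add ((summable_nat_add_iff 1).2 hs)] at h0
  simp only [pow_zero, Nat.factorial_zero, Nat.cast_one, div_one, zero_add, pow_one,
    Nat.factorial_one] at h0
  have : ∀ n : ℕ, a ^ (n + 1 + 1) / (n + 1 + 1)! = a ^ (n + 2) / (n + 2)! := by
    intro n; norm_num
  rw [tsum_congr this] at h0
  linarith

lemma exp_taylor_two_bound (a : ℝ) (ha : 0 ≤ a) :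
    Real.exp a - 1 - a ≤ a ^ 2 / 2 * Real.exp a := by
  have hs : Summable fun n : ℕ => a ^ n / n ! := Real.summable_pow_div_factorial a
  rw [← tsum_pow_div_factorial_add_two a]
  have key : ∀ n : ℕ, a ^ (n + 2) / (n + 2)! ≤ a ^ 2 / 2 * (a ^ n / n !) := by
    intro n
    have h1 : a ^ 2 / 2 * (a ^ n / n !) = a ^ (n + 2) / (2 * n !) := by
      rw [pow_add]; ring
    rw [h1]
    have h2 : (2 : ℝ) * n ! ≤ (n + 2)! := by
      have : (n + 2)! = (n + 2) * ((n + 1) * n !) := by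
        rw [Nat.factorial_succ, Nat.factorial_succ]
      rw [this]
      push_cast
      have hn0 : (0:ℝ) ≤ (n : ℝ) := Nat.cast_nonneg n
      have hf : (1:ℝ) ≤ (n ! : ℝ) := by exact_mod_cast Nat.one_le_iff_ne_zero.2 n.factorial_ne_zero
      nlinarith [hn0, hf, sq_nonneg ((n:ℝ))]
    have h3 : (0:ℝ) < 2 * n ! := by positivity
    exact div_le_div_of_nonneg_left (by positivity) h3 (by exact_mod_cast h2) |>.trans_eq rfl
  calc ∑' n : ℕ, a ^ (n + 2) / (n + 2)!
      ≤ ∑' n : ℕ, a ^ 2 / 2 * (a ^ n / n !) := by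
        refine Summable.tsum_le_tsum key ((summable_nat_add_iff 2).2 hs) (hs.mul_left _)
    _ = a ^ 2 / 2 * ∑' n : ℕ, a ^ n / n ! := tsum_mul_left
    _ = a ^ 2 / 2 * Real.exp a := by
        rw [Real.exp_eq_exp_ℝ, NormedSpace.exp_eq_tsum_div]

section BanachAlgebra
variable {𝔸 : Type*} [NormedRing 𝔸] [NormedAlgebra ℂ 𝔸] [CompleteSpace 𝔸]

set_option maxHeartbeats 800000 in
lemma norm_exp_sub_one_sub_le (A : 𝔸) :
    ‖NormedSpace.exp A - 1 - A‖ ≤ Real.exp ‖A‖ - 1 - ‖A‖ := by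
  have hsum : Summable fun n : ℕ => (n !⁻¹ : ℂ) • A ^ n :=
    NormedSpace.expSeries_summable' (𝕂 := ℂ) A
  have h0 : NormedSpace.exp A = ∑' n : ℕ, (n !⁻¹ : ℂ) • A ^ n := by
    rw [NormedSpace.exp_eq_tsum ℂ]
  rw [Summable.tsum_eq_zero_add hsum, Summable.tsum_eq_zero_add ((summable_nat_add_iff 1).2 hsum)] at h0
  simp only [Nat.factorial_zero, Nat.cast_one, inv_one, one_smul, pow_zero, pow_one,
    Nat.factorial_one, zero_add] at h0
  have heq : NormedSpace.exp A - 1 - A = ∑' n : ℕ, ((n + 1 + 1)!⁻¹ : ℂ) • A ^ (n + 1 + 1) := by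
    rw [h0]; abel
  rw [heq]
  have hns : Summable fun n : ℕ => ‖((n + 1 + 1)!⁻¹ : ℂ) • A ^ (n + 1 + 1)‖ := by
    exact (summable_nat_add_iff 2).2 (NormedSpace.norm_expSeries_summable' (𝕂 := ℂ) A)
  refine (norm_tsum_le_tsum_norm hns).trans ?_
  have hterm : ∀ n : ℕ, ‖((n + 1 + 1)!⁻¹ : ℂ) • A ^ (n + 1 + 1)‖ ≤ ‖A‖ ^ (n + 2) / (n + 2)! := by
    intro n
    rw [norm_smul, norm_inv]
    have h1 : ‖(((n + 1 + 1)! : ℕ) : ℂ)‖ = ((n + 2)! : ℝ) := by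
      rw [Complex.norm_natCast]
    rw [h1]
    have h2 : ‖A ^ (n + 1 + 1)‖ ≤ ‖A‖ ^ (n + 2) := by
      have := norm_pow_le' A (n := n + 2) (by omega)
      simpa using this
    have h3 : (0:ℝ) < ((n + 2)! : ℝ) := by positivity
    rw [div_eq_inv_mul]
    exact mul_le_mul_of_nonneg_left h2 (by positivity)
  calc ∑' n : ℕ, ‖((n + 1 + 1)!⁻¹ : ℂ) • A ^ (n + 1 + 1)‖
      ≤ ∑' n : ℕ, ‖A‖ ^ (n + 2) / (n + 2)! := by
        refine Summable.tsum_le_tsum hterm hns ?_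
        exact (summable_nat_add_iff 2).2 (Real.summable_pow_div_factorial ‖A‖)
    _ = Real.exp ‖A‖ - 1 - ‖A‖ := tsum_pow_div_factorial_add_two ‖A‖


lemma conj_exp_bound (A B : 𝔸) :
    ‖NormedSpace.exp (-A) * B * NormedSpace.exp A - B - (B * A - A * B)‖ ≤
      (Real.exp (2 * ‖A‖) - 1 - 2 * ‖A‖) * ‖B‖ := by
  obtain ⟨S, hSdef⟩ : ∃ S, S = NormedSpace.exp (-A) - 1 + A := ⟨_, rfl⟩
  obtain ⟨T, hTdef⟩ : ∃ T, T = NormedSpace.exp A - 1 - A := ⟨_, rfl⟩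
  have hF0 : 0 ≤ Real.exp ‖A‖ - 1 - ‖A‖ := by
    have := Real.add_one_le_exp ‖A‖; linarith
  have hS : ‖S‖ ≤ Real.exp ‖A‖ - 1 - ‖A‖ := by
    have := norm_exp_sub_one_sub_le (-A)
    rw [norm_neg, sub_neg_eq_add] at this
    rw [hSdef]; exact this
  have hT : ‖T‖ ≤ Real.exp ‖A‖ - 1 - ‖A‖ := by rw [hTdef]; exact norm_exp_sub_one_sub_le A
  have e1 : NormedSpace.exp (-A) = 1 - A + S := by rw [hSdef]; abel
  have e2 : NormedSpace.exp A = 1 + A + T := by rw [hTdef]; abel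
  have hkey : NormedSpace.exp (-A) * B * NormedSpace.exp A - B - (B * A - A * B)
      = B * T - A * B * A - A * (B * T) + S * B + S * (B * A) + S * (B * T) := by
    rw [e1, e2]; noncomm_ring
  rw [hkey]
  have tri : ‖B * T - A * B * A - A * (B * T) + S * B + S * (B * A) + S * (B * T)‖ ≤
      ‖B * T‖ + ‖A * B * A‖ + ‖A * (B * T)‖ + ‖S * B‖ + ‖S * (B * A)‖ + ‖S * (B * T)‖ := by
    have h6 := norm_add_le (B * T - A * B * A - A * (B * T) + S * B + S * (B * A)) (S * (B * T))
    have h5 := norm_add_le (B * T - A * B * A - A * (B * T) + S * B) (S * (B * A))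
    have h4 := norm_add_le (B * T - A * B * A - A * (B * T)) (S * B)
    have h3 := norm_sub_le (B * T - A * B * A) (A * (B * T))
    have h2 := norm_sub_le (B * T) (A * B * A)
    linarith
  refine tri.trans ?_
  have a0 := norm_nonneg A
  have r0 := norm_nonneg B
  have hBT : ‖B * T‖ ≤ ‖B‖ * (Real.exp ‖A‖ - 1 - ‖A‖) :=
    (norm_mul_le _ _).trans (mul_le_mul_of_nonneg_left hT r0)
  have hABA : ‖A * B * A‖ ≤ ‖A‖ * ‖B‖ * ‖A‖ :=
    (norm_mul_le _ _).trans (mul_le_mul_of_nonneg_right (norm_mul_le _ _) a0)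
  have hABT : ‖A * (B * T)‖ ≤ ‖A‖ * (‖B‖ * (Real.exp ‖A‖ - 1 - ‖A‖)) :=
    (norm_mul_le _ _).trans (mul_le_mul_of_nonneg_left hBT a0)
  have hSB : ‖S * B‖ ≤ (Real.exp ‖A‖ - 1 - ‖A‖) * ‖B‖ :=
    (norm_mul_le _ _).trans (mul_le_mul_of_nonneg_right hS r0)
  have hSBA : ‖S * (B * A)‖ ≤ (Real.exp ‖A‖ - 1 - ‖A‖) * (‖B‖ * ‖A‖) := by
    refine (norm_mul_le _ _).trans ?_
    exact mul_le_mul hS (norm_mul_le _ _) (norm_nonneg _) hF0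
  have hSBT : ‖S * (B * T)‖ ≤ (Real.exp ‖A‖ - 1 - ‖A‖) * (‖B‖ * (Real.exp ‖A‖ - 1 - ‖A‖)) := by
    refine (norm_mul_le _ _).trans ?_
    exact mul_le_mul hS hBT (norm_nonneg _) hF0
  have hE : Real.exp (2 * ‖A‖) = Real.exp ‖A‖ * Real.exp ‖A‖ := by
    rw [two_mul, Real.exp_add]
  have : ‖B‖ * (Real.exp ‖A‖ - 1 - ‖A‖) + ‖A‖ * ‖B‖ * ‖A‖ +
      ‖A‖ * (‖B‖ * (Real.exp ‖A‖ - 1 - ‖A‖)) + (Real.exp ‖A‖ - 1 - ‖A‖) * ‖B‖ +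
      (Real.exp ‖A‖ - 1 - ‖A‖) * (‖B‖ * ‖A‖) +
      (Real.exp ‖A‖ - 1 - ‖A‖) * (‖B‖ * (Real.exp ‖A‖ - 1 - ‖A‖)) =
      (Real.exp ‖A‖ * Real.exp ‖A‖ - 1 - 2 * ‖A‖) * ‖B‖ := by ring
  rw [hE]
  linarith

end BanachAlgebra

lemma err_mono (x c : ℝ) (hx : 0 ≤ x) (hxc : x ≤ c) :
    Real.exp (2 * x) - 1 - 2 * x ≤ 2 * c ^ 2 * Real.exp (2 * c) := by
  have h1 := exp_taylor_two_bound (2 * x) (by linarith)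
  have h2 : (2 * x) ^ 2 / 2 * Real.exp (2 * x) ≤ 2 * c ^ 2 * Real.exp (2 * c) := by
    have he : Real.exp (2 * x) ≤ Real.exp (2 * c) := Real.exp_le_exp.2 (by linarith)
    have hx2 : x ^ 2 ≤ c ^ 2 := by nlinarith
    have hp := Real.exp_pos (2 * x)
    nlinarith [Real.exp_pos (2 * c)]
  linarith


/-- `‖𝓔_t(ρ) − exp(−iHt) ρ exp(iHt)‖ ≤ 4(λt)² e^{2λt} ‖ρ‖`: the qDRIFT map agrees with
the exact Hamiltonian conjugation to first order in `t`, with second-order error. -/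
theorem qDrift_error_bound {n L : ℕ} (hn : 1 ≤ n) (hL : 1 ≤ L)
    (H : Fin L → Matrix (Fin n) (Fin n) ℂ)
    (hHerm : ∀ j, (H j).IsHermitian) (hHnorm : ∀ j, ‖H j‖ ≤ 1)
    (h : Fin L → ℝ) (hh : ∀ j, 0 < h j)
    (t : ℝ) (ht : 0 ≤ t) (ρ : Matrix (Fin n) (Fin n) ℂ) :
    ‖qDrift H h t ρ -
        NormedSpace.exp ((-Complex.I * (t : ℂ)) • ∑ j, ((h j : ℝ) : ℂ) • H j) * ρ *
          NormedSpace.exp ((Complex.I * (t : ℂ)) • ∑ j, ((h j : ℝ) : ℂ) • H j)‖ ≤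
      4 * ((∑ j, h j) * t) ^ 2 * Real.exp (2 * (∑ j, h j) * t) * ‖ρ‖ := by
  classical
  have hne : Nonempty (Fin L) := ⟨⟨0, hL⟩⟩
  set lam := ∑ j, h j with hlam
  have hlam0 : 0 < lam := Finset.sum_pos (fun j _ => hh j) Finset.univ_nonempty
  set c : ℂ := Complex.I * (lam : ℂ) * (t : ℂ) with hc
  set A0 : Matrix (Fin n) (Fin n) ℂ :=
    (Complex.I * (t : ℂ)) • ∑ j, ((h j : ℝ) : ℂ) • H j with hA0
  have hneg1 : (-Complex.I * (t : ℂ)) • (∑ j, ((h j : ℝ) : ℂ) • H j) = -A0 := by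
    rw [hA0, ← neg_smul]; congr 1; ring
  have hq : qDrift H h t ρ =
      ∑ j, (((h j / lam : ℝ)) : ℂ) •
        (NormedSpace.exp (-(c • H j)) * ρ * NormedSpace.exp (c • H j)) := by
    rw [qDrift, ← hlam]
    refine Finset.sum_congr rfl fun j _ => ?_
    have e1 : (-Complex.I * ((lam : ℝ) : ℂ) * (t : ℂ)) • H j = -(c • H j) := by
      rw [← neg_smul]; congr 1; rw [hc]; ring
    have e2 : (Complex.I * ((lam : ℝ) : ℂ) * (t : ℂ)) • H j = c • H j := by rw [hc]
    rw [e1, e2]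
  rw [hq, hneg1]
  -- abbreviations
  set p : Fin L → ℂ := fun j => ((h j / lam : ℝ) : ℂ) with hp
  have hp1 : ∑ j, p j = 1 := by
    rw [hp]
    rw [← Complex.ofReal_sum]
    rw [← Finset.sum_div, ← hlam, div_self hlam0.ne']
    norm_num
  have hpA : ∑ j, p j • (c • H j) = A0 := by
    rw [hA0, Finset.smul_sum]
    refine Finset.sum_congr rfl fun j _ => ?_
    rw [smul_smul, smul_smul]
    congr 1
    rw [hc, hp]
    have hlamC : ((lam : ℝ) : ℂ) ≠ 0 := by exact_mod_cast hlam0.ne'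
    push_cast
    field_simp
  -- splitting identity
  have split : (∑ j, p j • (NormedSpace.exp (-(c • H j)) * ρ * NormedSpace.exp (c • H j)))
        - NormedSpace.exp (-A0) * ρ * NormedSpace.exp A0
      = (∑ j, p j • (NormedSpace.exp (-(c • H j)) * ρ * NormedSpace.exp (c • H j) - ρ -
            (ρ * (c • H j) - (c • H j) * ρ)))
        - (NormedSpace.exp (-A0) * ρ * NormedSpace.exp A0 - ρ - (ρ * A0 - A0 * ρ)) := by
    have hcomm : ∑ j, p j • (ρ * (c • H j) - (c • H j) * ρ) = ρ * A0 - A0 * ρ := by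
      have heach : ∀ j, p j • (ρ * (c • H j) - (c • H j) * ρ)
          = ρ * (p j • (c • H j)) - (p j • (c • H j)) * ρ := by
        intro j
        simp only [smul_sub, mul_smul_comm, smul_mul_assoc]
      rw [Finset.sum_congr rfl fun j _ => heach j, Finset.sum_sub_distrib,
        ← Finset.mul_sum, ← Finset.sum_mul, hpA]
    have expand : ∑ j, p j • (NormedSpace.exp (-(c • H j)) * ρ * NormedSpace.exp (c • H j)
          - ρ - (ρ * (c • H j) - (c • H j) * ρ))
        = (∑ j, p j • (NormedSpace.exp (-(c • H j)) * ρ * NormedSpace.exp (c • H j)))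
          - (∑ j, p j • ρ) - ∑ j, p j • (ρ * (c • H j) - (c • H j) * ρ) := by
      rw [← Finset.sum_sub_distrib, ← Finset.sum_sub_distrib]
      exact Finset.sum_congr rfl fun j _ => by rw [smul_sub, smul_sub]
    rw [expand, ← Finset.sum_smul, hp1, one_smul, hcomm]
    abel
  rw [split]
  -- norms
  have hnormc : ‖c‖ = lam * t := by
    rw [hc, norm_mul, norm_mul, Complex.norm_I, one_mul, Complex.norm_real,
      Complex.norm_real, Real.norm_eq_abs, Real.norm_eq_abs, abs_of_pos hlam0, abs_of_nonneg ht]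
  have hAjn : ∀ j, ‖c • H j‖ ≤ lam * t := by
    intro j
    rw [norm_smul, hnormc]
    calc lam * t * ‖H j‖ ≤ lam * t * 1 :=
          mul_le_mul_of_nonneg_left (hHnorm j) (by positivity)
      _ = lam * t := mul_one _
  have hA0n : ‖A0‖ ≤ lam * t := by
    rw [hA0, norm_smul]
    have h1 : ‖Complex.I * (t : ℂ)‖ = t := by
      rw [norm_mul, Complex.norm_I, one_mul, Complex.norm_real, Real.norm_eq_abs,
        abs_of_nonneg ht]
    have h2 : ‖∑ j, ((h j : ℝ) : ℂ) • H j‖ ≤ lam := by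
      refine (norm_sum_le _ _).trans ?_
      rw [hlam]
      refine Finset.sum_le_sum fun j _ => ?_
      rw [norm_smul, Complex.norm_real, Real.norm_eq_abs, abs_of_pos (hh j)]
      calc h j * ‖H j‖ ≤ h j * 1 := mul_le_mul_of_nonneg_left (hHnorm j) (hh j).le
        _ = h j := mul_one _
    calc ‖Complex.I * (t : ℂ)‖ * ‖∑ j, ((h j : ℝ) : ℂ) • H j‖ ≤ t * lam := by
          rw [h1]; exact mul_le_mul_of_nonneg_left h2 ht
      _ = lam * t := mul_comm _ _
  set C : ℝ := 2 * (lam * t) ^ 2 * Real.exp (2 * (lam * t)) with hC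
  have hC0 : 0 ≤ C := by positivity
  have hDj : ∀ j, ‖NormedSpace.exp (-(c • H j)) * ρ * NormedSpace.exp (c • H j) - ρ -
      (ρ * (c • H j) - (c • H j) * ρ)‖ ≤ C * ‖ρ‖ := by
    intro j
    refine (conj_exp_bound (c • H j) ρ).trans ?_
    exact mul_le_mul_of_nonneg_right (err_mono _ _ (norm_nonneg _) (hAjn j)) (norm_nonneg ρ)
  have hD0 : ‖NormedSpace.exp (-A0) * ρ * NormedSpace.exp A0 - ρ -
      (ρ * A0 - A0 * ρ)‖ ≤ C * ‖ρ‖ := by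
    refine (conj_exp_bound A0 ρ).trans ?_
    exact mul_le_mul_of_nonneg_right (err_mono _ _ (norm_nonneg _) hA0n) (norm_nonneg ρ)
  have hsumbound : ‖∑ j, p j • (NormedSpace.exp (-(c • H j)) * ρ * NormedSpace.exp (c • H j)
      - ρ - (ρ * (c • H j) - (c • H j) * ρ))‖ ≤ C * ‖ρ‖ := by
    refine (norm_sum_le _ _).trans ?_
    have hterm : ∀ j ∈ Finset.univ, ‖p j • (NormedSpace.exp (-(c • H j)) * ρ *
        NormedSpace.exp (c • H j) - ρ - (ρ * (c • H j) - (c • H j) * ρ))‖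
        ≤ (h j / lam) * (C * ‖ρ‖) := by
      intro j _
      rw [norm_smul, hp]
      have hpj : ‖(((h j / lam : ℝ)) : ℂ)‖ = h j / lam := by
        rw [Complex.norm_real, Real.norm_eq_abs, abs_of_nonneg (div_nonneg (hh j).le hlam0.le)]
      rw [hpj]
      exact mul_le_mul_of_nonneg_left (hDj j) (div_nonneg (hh j).le hlam0.le)
    refine (Finset.sum_le_sum hterm).trans ?_
    rw [← Finset.sum_mul, ← Finset.sum_div, ← hlam, div_self hlam0.ne', one_mul]
  calc ‖(∑ j, p j • (NormedSpace.exp (-(c • H j)) * ρ * NormedSpace.exp (c • H j) - ρ -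
            (ρ * (c • H j) - (c • H j) * ρ)))
        - (NormedSpace.exp (-A0) * ρ * NormedSpace.exp A0 - ρ - (ρ * A0 - A0 * ρ))‖
      ≤ C * ‖ρ‖ + C * ‖ρ‖ := (norm_sub_le _ _).trans (add_le_add hsumbound hD0)
    _ ≤ 4 * (lam * t) ^ 2 * Real.exp (2 * lam * t) * ‖ρ‖ := by
        rw [hC]
        have : 2 * (lam * t) = 2 * lam * t := by ring
        rw [this]
        nlinarith [norm_nonneg ρ, Real.exp_pos (2 * lam * t), sq_nonneg (lam * t)]
end

section
/- For every T ≥ 0, every positive integer N, and every n×n complex matrix ρ, the N-fold composition of the qDRIFT map with step t = T/N satisfies ‖𝓔_{T/N}^N(ρ) − exp(−iHT) ρ exp(iHT)‖ ≤ (4(λT)²/N) · e^{2λT/N} · ‖ρ‖. -/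
open scoped Matrix.Norms.L2Operator

open Nat Matrix NormedSpace
variable {n : ℕ}

lemma exp_rem {A : Type*} [NormedRing A] [NormedAlgebra ℂ A] [CompleteSpace A] (x : A) :
    ‖exp x - 1 - x‖ ≤ ‖x‖ ^ 2 / 2 * Real.exp ‖x‖ := by
  have hs : Summable (fun k : ℕ => (k ! : ℂ)⁻¹ • x ^ k) := expSeries_summable' x
  have h0 : exp x = ∑' k : ℕ, (k ! : ℂ)⁻¹ • x ^ k := by
    rw [exp_eq_tsum ℂ]
  have htail := Summable.sum_add_tsum_nat_add (f := fun k : ℕ => (k ! : ℂ)⁻¹ • x ^ k) 2 hs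
  have hrange : ∑ i ∈ Finset.range 2, (i ! : ℂ)⁻¹ • x ^ i = 1 + x := by
    simp [Finset.sum_range_succ]
  have heq : exp x - 1 - x = ∑' k : ℕ, ((k + 2)! : ℂ)⁻¹ • x ^ (k + 2) := by
    rw [h0, ← htail, hrange]; abel
  rw [heq]
  have hsum2 : Summable (fun k : ℕ => ‖x‖ ^ 2 / 2 * (‖x‖ ^ k / k !)) :=
    (Real.summable_pow_div_factorial ‖x‖).mul_left _
  have hbound : ∀ k : ℕ, ‖((k + 2)! : ℂ)⁻¹ • x ^ (k + 2)‖ ≤ ‖x‖ ^ 2 / 2 * (‖x‖ ^ k / k !) := by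
    intro k
    rw [norm_smul]
    have h1 : ‖x ^ (k+2)‖ ≤ ‖x‖ ^ (k+2) := norm_pow_le' x (by omega)
    have h2 : ‖(((k+2)! : ℂ))⁻¹‖ = (((k+2)! : ℝ))⁻¹ := by
      rw [norm_inv]; norm_cast
    rw [h2]
    have h3 : (2 * k ! : ℝ) ≤ (k+2)! := by
      have h4 : 2 * k ! ≤ (k+2)! := by
        have h5 : 2 ≤ (k+2) * (k+1) := by nlinarith [Nat.zero_le k]
        calc 2 * k ! ≤ ((k+2) * (k+1)) * k ! := Nat.mul_le_mul_right _ h5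
        _ = (k+2)! := by rw [Nat.factorial_succ, Nat.factorial_succ, mul_assoc]
      exact_mod_cast h4
    have hf : (0:ℝ) < k ! := by positivity
    have hf2 : (0:ℝ) < ((k+2)! : ℝ) := by positivity
    calc (((k+2)! : ℝ))⁻¹ * ‖x ^ (k+2)‖ ≤ (((k+2)! : ℝ))⁻¹ * ‖x‖ ^ (k+2) := by
          gcongr
      _ ≤ (2 * k !:ℝ)⁻¹ * ‖x‖ ^ (k+2) := by gcongr <;> positivity
      _ = ‖x‖ ^ 2 / 2 * (‖x‖ ^ k / k !) := by
          rw [pow_add]; field_simp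
  have hfinal : (∑' k : ℕ, (‖x‖ ^ 2 / 2 * (‖x‖ ^ k / k !))) = ‖x‖ ^ 2 / 2 * Real.exp ‖x‖ := by
    rw [tsum_mul_left, Real.exp_eq_exp_ℝ, exp_eq_tsum_div]
  exact hfinal ▸ tsum_of_norm_bounded hsum2.hasSum hbound

variable {n : ℕ}

lemma expSkew_conjTranspose (X : Matrix (Fin n) (Fin n) ℂ) (hX : Xᴴ = -X) :
    (exp X)ᴴ = exp (-X) := by
  rw [← hX, ← Matrix.exp_conjTranspose]

lemma expSkew_mul_conjTranspose (X : Matrix (Fin n) (Fin n) ℂ) (hX : Xᴴ = -X) :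
    exp X * (exp X)ᴴ = 1 := by
  rw [expSkew_conjTranspose X hX, ← Matrix.exp_add_of_commute X (-X) (Commute.neg_right (Commute.refl X)),
    add_neg_cancel, exp_zero]

lemma expSkew_conjTranspose_mul (X : Matrix (Fin n) (Fin n) ℂ) (hX : Xᴴ = -X) :
    (exp X)ᴴ * exp X = 1 := by
  rw [expSkew_conjTranspose X hX, ← Matrix.exp_add_of_commute (-X) X (Commute.neg_left (Commute.refl X)),
    neg_add_cancel, exp_zero]

lemma norm_expSkew (hn : 1 ≤ n) (X : Matrix (Fin n) (Fin n) ℂ) (hX : Xᴴ = -X) :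
    ‖exp X‖ = 1 := by
  haveI : Nonempty (Fin n) := ⟨⟨0, hn⟩⟩
  have h1 : ‖exp X‖ * ‖exp X‖ = 1 := by
    rw [← CStarRing.norm_star_mul_self (x := exp X), Matrix.star_eq_conjTranspose,
      expSkew_conjTranspose_mul X hX, norm_one]
  have h2 : (0:ℝ) ≤ ‖exp X‖ := norm_nonneg _
  nlinarith

lemma conj_bound (hn : 1 ≤ n) (X B : Matrix (Fin n) (Fin n) ℂ) (hX : Xᴴ = -X)
    {a : ℝ} (ha : ‖X‖ ≤ a) :
    ‖exp X * B * (exp X)ᴴ - (B + X * B - B * X)‖ ≤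
      2 * a ^ 2 * Real.exp (2 * a) * ‖B‖ := by
  haveI : Nonempty (Fin n) := ⟨⟨0, hn⟩⟩
  have ha0 : 0 ≤ a := le_trans (norm_nonneg X) ha
  set U := exp X with hU
  set S := U - 1 - X with hSdef
  set S' := Uᴴ - 1 + X with hS'def
  have hUH : Uᴴ = exp (-X) := expSkew_conjTranspose X hX
  have hnU : ‖Uᴴ‖ ≤ 1 := by
    rw [hUH]
    have : (-X)ᴴ = -(-X) := by rw [Matrix.conjTranspose_neg, hX, neg_neg]
    exact le_of_eq (norm_expSkew hn (-X) this)
  have hrem : ∀ b : ℝ, ‖X‖ ≤ b → ‖S‖ ≤ b ^ 2 / 2 * Real.exp b ∧ ‖S'‖ ≤ b ^ 2 / 2 * Real.exp b := by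
    intro b hb
    have hb0 : 0 ≤ b := le_trans (norm_nonneg X) hb
    constructor
    · calc ‖S‖ ≤ ‖X‖ ^ 2 / 2 * Real.exp ‖X‖ := exp_rem X
        _ ≤ b ^ 2 / 2 * Real.exp b := by
            gcongr <;> first | exact norm_nonneg X | exact hb
    · have : S' = exp (-X) - 1 - (-X) := by rw [hS'def, hUH]; abel
      rw [this]
      calc ‖exp (-X) - 1 - (-X)‖ ≤ ‖-X‖ ^ 2 / 2 * Real.exp ‖-X‖ := exp_rem (-X)
        _ = ‖X‖ ^ 2 / 2 * Real.exp ‖X‖ := by rw [norm_neg]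
        _ ≤ b ^ 2 / 2 * Real.exp b := by
            gcongr <;> first | exact norm_nonneg X | exact hb
  obtain ⟨hS, hS'⟩ := hrem a ha
  have key : U * B * Uᴴ - (B + X * B - B * X) =
      S * B * Uᴴ + (1 + X) * B * S' - X * B * X := by
    have e1 : U = 1 + X + S := by rw [hSdef]; abel
    have e2 : Uᴴ = 1 - X + S' := by rw [hS'def]; abel
    calc U * B * Uᴴ - (B + X * B - B * X)
        = (1 + X + S) * B * Uᴴ - (B + X * B - B * X) := by rw [← e1]
      _ = (1 + X) * B * (1 - X + S') + S * B * Uᴴ - (B + X * B - B * X) := by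
          rw [← e2]; noncomm_ring
      _ = S * B * Uᴴ + (1 + X) * B * S' - X * B * X := by noncomm_ring
  rw [key]
  have hX1 : ‖(1 : Matrix (Fin n) (Fin n) ℂ) + X‖ ≤ 1 + a := by
    calc ‖(1 : Matrix (Fin n) (Fin n) ℂ) + X‖ ≤ ‖(1 : Matrix (Fin n) (Fin n) ℂ)‖ + ‖X‖ :=
          norm_add_le _ _
      _ ≤ 1 + a := by rw [norm_one]; linarith
  have t1 : ‖S * B * Uᴴ‖ ≤ (a ^ 2 / 2 * Real.exp a) * ‖B‖ := by
    calc ‖S * B * Uᴴ‖ ≤ ‖S * B‖ * ‖Uᴴ‖ := norm_mul_le _ _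
      _ ≤ ‖S‖ * ‖B‖ * ‖Uᴴ‖ := by gcongr; exact norm_mul_le _ _
      _ ≤ (a ^ 2 / 2 * Real.exp a) * ‖B‖ * 1 := by
          gcongr
      _ = (a ^ 2 / 2 * Real.exp a) * ‖B‖ := by ring
  have t2 : ‖(1 + X) * B * S'‖ ≤ (1 + a) * ‖B‖ * (a ^ 2 / 2 * Real.exp a) := by
    calc ‖(1 + X) * B * S'‖ ≤ ‖(1 + X) * B‖ * ‖S'‖ := norm_mul_le _ _
      _ ≤ ‖(1:Matrix (Fin n) (Fin n) ℂ) + X‖ * ‖B‖ * ‖S'‖ := by gcongr; exact norm_mul_le _ _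
      _ ≤ (1 + a) * ‖B‖ * (a ^ 2 / 2 * Real.exp a) := by
          gcongr
  have t3 : ‖X * B * X‖ ≤ a * ‖B‖ * a := by
    calc ‖X * B * X‖ ≤ ‖X * B‖ * ‖X‖ := norm_mul_le _ _
      _ ≤ ‖X‖ * ‖B‖ * ‖X‖ := by gcongr; exact norm_mul_le _ _
      _ ≤ a * ‖B‖ * a := by
          gcongr
  have htot : ‖S * B * Uᴴ + (1 + X) * B * S' - X * B * X‖ ≤
      ‖S * B * Uᴴ‖ + ‖(1 + X) * B * S'‖ + ‖X * B * X‖ := by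
    calc ‖S * B * Uᴴ + (1 + X) * B * S' - X * B * X‖
        ≤ ‖S * B * Uᴴ + (1 + X) * B * S'‖ + ‖X * B * X‖ := norm_sub_le _ _
      _ ≤ ‖S * B * Uᴴ‖ + ‖(1 + X) * B * S'‖ + ‖X * B * X‖ := by
          gcongr; exact norm_add_le _ _
  have hnum : (a ^ 2 / 2 * Real.exp a) * ‖B‖ + (1 + a) * ‖B‖ * (a ^ 2 / 2 * Real.exp a)
      + a * ‖B‖ * a ≤ 2 * a ^ 2 * Real.exp (2 * a) * ‖B‖ := by
    have hE : Real.exp (2 * a) = Real.exp a * Real.exp a := by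
      rw [← Real.exp_add]; ring_nf
    have h2 : 1 + a ≤ Real.exp a := by linarith [Real.add_one_le_exp a]
    have h3 : (0:ℝ) < Real.exp a := Real.exp_pos a
    have h4 : (0:ℝ) ≤ ‖B‖ := norm_nonneg B
    nlinarith [sq_nonneg a, mul_nonneg (mul_nonneg ha0 ha0) h4,
      mul_nonneg h4 (mul_nonneg (sq_nonneg a) h3.le)]
  linarith [le_trans htot (by linarith : ‖S * B * Uᴴ‖ + ‖(1 + X) * B * S'‖ + ‖X * B * X‖ ≤
    (a ^ 2 / 2 * Real.exp a) * ‖B‖ + (1 + a) * ‖B‖ * (a ^ 2 / 2 * Real.exp a) + a * ‖B‖ * a)]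

lemma iterate_bound (E : Matrix (Fin n) (Fin n) ℂ → Matrix (Fin n) (Fin n) ℂ)
    (V W : Matrix (Fin n) (Fin n) ℂ) {ε : ℝ} (hε : 0 ≤ ε)
    (hstep : ∀ B, ‖E B - V * B * W‖ ≤ ε * ‖B‖)
    (hE : ∀ B, ‖E B‖ ≤ ‖B‖) (hV : ‖V‖ ≤ 1) (hW : ‖W‖ ≤ 1)
    (N : ℕ) (ρ : Matrix (Fin n) (Fin n) ℂ) :
    ‖E^[N] ρ - V ^ N * ρ * W ^ N‖ ≤ N * ε * ‖ρ‖ := by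
  induction N with
  | zero => simp
  | succ k ih =>
    have hiter : ‖E^[k] ρ‖ ≤ ‖ρ‖ := by
      clear ih
      induction k with
      | zero => simp
      | succ m ihm =>
        rw [Function.iterate_succ_apply']
        exact le_trans (hE _) ihm
    set σ := E^[k] ρ with hσ
    have hsplit : E^[k+1] ρ - V ^ (k+1) * ρ * W ^ (k+1) =
        (E σ - V * σ * W) + V * (σ - V ^ k * ρ * W ^ k) * W := by
      rw [Function.iterate_succ_apply', pow_succ' V, pow_succ W]
      noncomm_ring
    rw [hsplit]
    have h1 : ‖E σ - V * σ * W‖ ≤ ε * ‖ρ‖ :=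
      le_trans (hstep σ) (by gcongr)
    have h2 : ‖V * (σ - V ^ k * ρ * W ^ k) * W‖ ≤ k * ε * ‖ρ‖ := by
      calc ‖V * (σ - V ^ k * ρ * W ^ k) * W‖
          ≤ ‖V * (σ - V ^ k * ρ * W ^ k)‖ * ‖W‖ := norm_mul_le _ _
        _ ≤ ‖V‖ * ‖σ - V ^ k * ρ * W ^ k‖ * ‖W‖ := by gcongr; exact norm_mul_le _ _
        _ ≤ 1 * (k * ε * ‖ρ‖) * 1 := by gcongr <;> positivity
        _ = k * ε * ‖ρ‖ := by ring
    calc ‖(E σ - V * σ * W) + V * (σ - V ^ k * ρ * W ^ k) * W‖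
        ≤ ‖E σ - V * σ * W‖ + ‖V * (σ - V ^ k * ρ * W ^ k) * W‖ := norm_add_le _ _
      _ ≤ ε * ‖ρ‖ + k * ε * ‖ρ‖ := add_le_add h1 h2
      _ = (k + 1) * ε * ‖ρ‖ := by ring
      _ = ((k + 1 : ℕ) : ℝ) * ε * ‖ρ‖ := by push_cast; ring

lemma skew_of_herm (A : Matrix (Fin n) (Fin n) ℂ) (hA : Aᴴ = A) (c : ℂ) (hc : star c = -c) :
    (c • A)ᴴ = -(c • A) := by
  rw [Matrix.conjTranspose_smul, hA, hc, neg_smul]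

lemma step_bound {L : ℕ} (hn : 1 ≤ n) (hL : 1 ≤ L)
    (H : Fin L → Matrix (Fin n) (Fin n) ℂ)
    (hHerm : ∀ j, (H j).IsHermitian) (hHnorm : ∀ j, ‖H j‖ ≤ 1)
    (h : Fin L → ℝ) (hh : ∀ j, 0 < h j)
    (t : ℝ) (ht : 0 ≤ t) (B : Matrix (Fin n) (Fin n) ℂ) :
    ‖qDrift H h t B -
        NormedSpace.exp ((-Complex.I * (t : ℂ)) • ∑ j, ((h j : ℝ) : ℂ) • H j) * B *
          (NormedSpace.exp ((-Complex.I * (t : ℂ)) • ∑ j, ((h j : ℝ) : ℂ) • H j))ᴴ‖ ≤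
      4 * ((∑ k, h k) * t) ^ 2 * Real.exp (2 * ((∑ k, h k) * t)) * ‖B‖ := by
  haveI : Nonempty (Fin L) := ⟨⟨0, hL⟩⟩
  set lam : ℝ := ∑ k, h k with hlam
  have hlam_pos : 0 < lam := Finset.sum_pos (fun j _ => hh j) Finset.univ_nonempty
  have hlam_ne : (lam : ℂ) ≠ 0 := by exact_mod_cast hlam_pos.ne'
  set a : ℝ := lam * t with ha_def
  have ha0 : 0 ≤ a := mul_nonneg hlam_pos.le ht
  set M : Matrix (Fin n) (Fin n) ℂ := ∑ j, ((h j : ℝ) : ℂ) • H j with hM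
  set X : Fin L → Matrix (Fin n) (Fin n) ℂ :=
    fun j => (-Complex.I * (lam : ℂ) * (t : ℂ)) • H j with hX
  set Y : Matrix (Fin n) (Fin n) ℂ := (-Complex.I * (t : ℂ)) • M with hY
  set U : Fin L → Matrix (Fin n) (Fin n) ℂ := fun j => NormedSpace.exp (X j) with hU
  set V : Matrix (Fin n) (Fin n) ℂ := NormedSpace.exp Y with hV
  set p : Fin L → ℂ := fun j => ((h j / lam : ℝ) : ℂ) with hp
  -- skewness
  have hXskew : ∀ j, (X j)ᴴ = -(X j) := by
    intro j
    refine skew_of_herm (H j) (hHerm j) _ ?_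
    rw [Complex.star_def]
    simp only [_root_.map_mul, map_neg, Complex.conj_I, Complex.conj_ofReal]
    ring
  have hMherm : Mᴴ = M := by
    rw [hM, Matrix.conjTranspose_sum]
    refine Finset.sum_congr rfl fun j _ => ?_
    rw [Matrix.conjTranspose_smul, hHerm j, Complex.star_def, Complex.conj_ofReal]
  have hYskew : Yᴴ = -Y := by
    refine skew_of_herm M hMherm _ ?_
    rw [Complex.star_def]
    simp only [_root_.map_mul, map_neg, Complex.conj_I, Complex.conj_ofReal]
    ring
  -- norms
  have hXnorm : ∀ j, ‖X j‖ ≤ a := by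
    intro j
    rw [hX]
    calc ‖(-Complex.I * (lam : ℂ) * (t : ℂ)) • H j‖
        = ‖(-Complex.I * (lam : ℂ) * (t : ℂ))‖ * ‖H j‖ := norm_smul _ _
      _ ≤ ‖(-Complex.I * (lam : ℂ) * (t : ℂ))‖ * 1 := by gcongr; exact hHnorm j
      _ = a := by
          simp [norm_mul, Complex.norm_real, abs_of_nonneg hlam_pos.le, abs_of_nonneg ht]; rfl
  have hMnorm : ‖M‖ ≤ lam := by
    rw [hM]
    calc ‖∑ j, ((h j : ℝ) : ℂ) • H j‖ ≤ ∑ j, ‖((h j : ℝ) : ℂ) • H j‖ := norm_sum_le _ _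
      _ ≤ ∑ j, h j := by
          refine Finset.sum_le_sum fun j _ => ?_
          rw [norm_smul, Complex.norm_real, Real.norm_eq_abs, abs_of_nonneg (hh j).le]
          exact mul_le_of_le_one_right (hh j).le (hHnorm j)
      _ = lam := rfl
  have hYnorm : ‖Y‖ ≤ a := by
    rw [hY, norm_smul]
    calc ‖(-Complex.I * (t : ℂ))‖ * ‖M‖ = t * ‖M‖ := by
          simp [norm_mul, Complex.norm_real, abs_of_nonneg ht]
      _ ≤ t * lam := by gcongr
      _ = a := by rw [ha_def]; ring
  -- rewrite qDrift
  have hUjH : ∀ j, NormedSpace.exp ((Complex.I * (lam : ℂ) * (t : ℂ)) • H j) = (U j)ᴴ := by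
    intro j
    rw [hU, expSkew_conjTranspose (X j) (hXskew j), hX]
    congr 1
    rw [← neg_smul]
    congr 1
    ring
  have hqd : qDrift H h t B = ∑ j, p j • (U j * B * (U j)ᴴ) := by
    unfold qDrift
    refine Finset.sum_congr rfl fun j _ => ?_
    rw [hUjH j]
  -- sums of weights
  have hsum_real : ∑ j, h j / lam = 1 := by
    rw [← Finset.sum_div, ← hlam]
    field_simp
  have hsum_p : ∑ j, p j = 1 := by
    have := congrArg (fun r : ℝ => (r : ℂ)) hsum_real
    simpa [hp, Complex.ofReal_sum] using this
  have hsum_pX : ∑ j, p j • X j = Y := by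
    rw [hY, hM, Finset.smul_sum]
    refine Finset.sum_congr rfl fun j _ => ?_
    rw [hX, hp, smul_smul, smul_smul]
    congr 1
    push_cast
    field_simp
  have hmid : ∑ j, p j • (B + X j * B - B * X j) = B + Y * B - B * Y := by
    calc ∑ j, p j • (B + X j * B - B * X j)
        = ∑ j, (p j • B + (p j • X j) * B - B * (p j • X j)) := by
          refine Finset.sum_congr rfl fun j _ => ?_
          simp only [smul_add, smul_sub, smul_mul_assoc, mul_smul_comm, smul_smul]
      _ = (∑ j, p j) • B + (∑ j, p j • X j) * B - B * (∑ j, p j • X j) := by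
          rw [Finset.sum_sub_distrib, Finset.sum_add_distrib, ← Finset.sum_smul,
            ← Finset.sum_mul, ← Finset.mul_sum]
      _ = B + Y * B - B * Y := by rw [hsum_p, hsum_pX, one_smul]
  have hiden : qDrift H h t B - V * B * Vᴴ =
      (∑ j, p j • (U j * B * (U j)ᴴ - (B + X j * B - B * X j))) -
        (V * B * Vᴴ - (B + Y * B - B * Y)) := by
    have hsplit : ∑ j, p j • (U j * B * (U j)ᴴ - (B + X j * B - B * X j)) =
        ∑ j, p j • (U j * B * (U j)ᴴ) - ∑ j, p j • (B + X j * B - B * X j) := by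
      rw [← Finset.sum_sub_distrib]
      exact Finset.sum_congr rfl fun j _ => smul_sub _ _ _
    rw [hsplit, hmid, hqd]
    abel
  -- norm bounds
  have hRj : ∀ j, ‖U j * B * (U j)ᴴ - (B + X j * B - B * X j)‖ ≤
      2 * a ^ 2 * Real.exp (2 * a) * ‖B‖ :=
    fun j => conj_bound hn (X j) B (hXskew j) (hXnorm j)
  have hR : ‖V * B * Vᴴ - (B + Y * B - B * Y)‖ ≤ 2 * a ^ 2 * Real.exp (2 * a) * ‖B‖ :=
    conj_bound hn Y B hYskew hYnorm
  have hpnorm : ∀ j, ‖p j‖ = h j / lam := by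
    intro j
    rw [hp]
    simp only [Complex.norm_real, Real.norm_eq_abs]
    exact abs_of_nonneg (div_nonneg (hh j).le hlam_pos.le)
  have hC0 : 0 ≤ 2 * a ^ 2 * Real.exp (2 * a) * ‖B‖ := by positivity
  calc ‖qDrift H h t B - V * B * Vᴴ‖
      = ‖(∑ j, p j • (U j * B * (U j)ᴴ - (B + X j * B - B * X j))) -
          (V * B * Vᴴ - (B + Y * B - B * Y))‖ := by rw [hiden]
    _ ≤ ‖∑ j, p j • (U j * B * (U j)ᴴ - (B + X j * B - B * X j))‖ +
          ‖V * B * Vᴴ - (B + Y * B - B * Y)‖ := norm_sub_le _ _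
    _ ≤ (∑ j, ‖p j • (U j * B * (U j)ᴴ - (B + X j * B - B * X j))‖) +
          2 * a ^ 2 * Real.exp (2 * a) * ‖B‖ := add_le_add (norm_sum_le _ _) hR
    _ ≤ (∑ j, (h j / lam) * (2 * a ^ 2 * Real.exp (2 * a) * ‖B‖)) +
          2 * a ^ 2 * Real.exp (2 * a) * ‖B‖ := by
        gcongr with j hj
        rw [norm_smul, hpnorm j]
        exact mul_le_mul le_rfl (hRj j) (norm_nonneg _)
          (div_nonneg (hh j).le hlam_pos.le)
    _ = (∑ j, h j / lam) * (2 * a ^ 2 * Real.exp (2 * a) * ‖B‖) +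
          2 * a ^ 2 * Real.exp (2 * a) * ‖B‖ := by rw [Finset.sum_mul]
    _ = 4 * a ^ 2 * Real.exp (2 * a) * ‖B‖ := by rw [hsum_real]; ring

lemma qDrift_contract {L : ℕ} (hn : 1 ≤ n) (hL : 1 ≤ L)
    (H : Fin L → Matrix (Fin n) (Fin n) ℂ)
    (hHerm : ∀ j, (H j).IsHermitian) (h : Fin L → ℝ) (hh : ∀ j, 0 < h j)
    (t : ℝ) (B : Matrix (Fin n) (Fin n) ℂ) :
    ‖qDrift H h t B‖ ≤ ‖B‖ := by
  haveI : Nonempty (Fin L) := ⟨⟨0, hL⟩⟩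
  set lam : ℝ := ∑ k, h k with hlam
  have hlam_pos : 0 < lam := Finset.sum_pos (fun j _ => hh j) Finset.univ_nonempty
  have hskew1 : ∀ j : Fin L, ((-Complex.I * (lam : ℂ) * (t : ℂ)) • H j)ᴴ =
      -((-Complex.I * (lam : ℂ) * (t : ℂ)) • H j) := by
    intro j
    refine skew_of_herm (H j) (hHerm j) _ ?_
    rw [Complex.star_def]
    simp only [_root_.map_mul, map_neg, Complex.conj_I, Complex.conj_ofReal]
    ring
  have hskew2 : ∀ j : Fin L, ((Complex.I * (lam : ℂ) * (t : ℂ)) • H j)ᴴ =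
      -((Complex.I * (lam : ℂ) * (t : ℂ)) • H j) := by
    intro j
    refine skew_of_herm (H j) (hHerm j) _ ?_
    rw [Complex.star_def]
    simp only [_root_.map_mul, map_neg, Complex.conj_I, Complex.conj_ofReal]
    ring
  unfold qDrift
  calc ‖∑ j, (((h j / ∑ k, h k : ℝ)) : ℂ) •
      (NormedSpace.exp ((-Complex.I * ((∑ k, h k : ℝ) : ℂ) * (t : ℂ)) • H j) * B *
        NormedSpace.exp ((Complex.I * ((∑ k, h k : ℝ) : ℂ) * (t : ℂ)) • H j))‖
      ≤ ∑ j, ‖(((h j / lam : ℝ)) : ℂ) •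
        (NormedSpace.exp ((-Complex.I * (lam : ℂ) * (t : ℂ)) • H j) * B *
          NormedSpace.exp ((Complex.I * (lam : ℂ) * (t : ℂ)) • H j))‖ := norm_sum_le _ _
    _ ≤ ∑ j, (h j / lam) * ‖B‖ := by
        refine Finset.sum_le_sum fun j _ => ?_
        rw [norm_smul, Complex.norm_real, Real.norm_eq_abs,
          abs_of_nonneg (div_nonneg (hh j).le hlam_pos.le)]
        refine mul_le_mul_of_nonneg_left ?_ (div_nonneg (hh j).le hlam_pos.le)
        calc ‖NormedSpace.exp ((-Complex.I * (lam : ℂ) * (t : ℂ)) • H j) * B *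
            NormedSpace.exp ((Complex.I * (lam : ℂ) * (t : ℂ)) • H j)‖
            ≤ ‖NormedSpace.exp ((-Complex.I * (lam : ℂ) * (t : ℂ)) • H j) * B‖ *
              ‖NormedSpace.exp ((Complex.I * (lam : ℂ) * (t : ℂ)) • H j)‖ := norm_mul_le _ _
          _ ≤ ‖NormedSpace.exp ((-Complex.I * (lam : ℂ) * (t : ℂ)) • H j)‖ * ‖B‖ *
              ‖NormedSpace.exp ((Complex.I * (lam : ℂ) * (t : ℂ)) • H j)‖ := by
              gcongr; exact norm_mul_le _ _
          _ = 1 * ‖B‖ * 1 := by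
              rw [norm_expSkew hn _ (hskew1 j), norm_expSkew hn _ (hskew2 j)]
          _ = ‖B‖ := by ring
    _ = (∑ j, h j / lam) * ‖B‖ := by rw [Finset.sum_mul]
    _ = ‖B‖ := by
        rw [← Finset.sum_div, ← hlam]
        field_simp

/-- `N`-fold composition of the qDRIFT map with step `t = T/N` satisfies
`‖𝓔_{T/N}^N(ρ) − exp(−iHT) ρ exp(iHT)‖ ≤ (4(λT)²/N)·e^{2λT/N}·‖ρ‖`. -/
theorem qDrift_iterate_error_bound {n L : ℕ} (hn : 1 ≤ n) (hL : 1 ≤ L)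
    (H : Fin L → Matrix (Fin n) (Fin n) ℂ)
    (hHerm : ∀ j, (H j).IsHermitian) (hHnorm : ∀ j, ‖H j‖ ≤ 1)
    (h : Fin L → ℝ) (hh : ∀ j, 0 < h j)
    (T : ℝ) (hT : 0 ≤ T) (N : ℕ) (hN : 0 < N) (ρ : Matrix (Fin n) (Fin n) ℂ) :
    ‖(qDrift H h (T / N))^[N] ρ -
        NormedSpace.exp ((-Complex.I * (T : ℂ)) • ∑ j, ((h j : ℝ) : ℂ) • H j) * ρ *
          NormedSpace.exp ((Complex.I * (T : ℂ)) • ∑ j, ((h j : ℝ) : ℂ) • H j)‖ ≤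
      4 * ((∑ j, h j) * T) ^ 2 / N * Real.exp (2 * (∑ j, h j) * T / N) * ‖ρ‖ := by
  haveI : Nonempty (Fin L) := ⟨⟨0, hL⟩⟩
  set lam : ℝ := ∑ k, h k with hlam
  have hlam_pos : 0 < lam := Finset.sum_pos (fun j _ => hh j) Finset.univ_nonempty
  set t : ℝ := T / N with ht_def
  have ht : 0 ≤ t := div_nonneg hT (Nat.cast_nonneg N)
  set M : Matrix (Fin n) (Fin n) ℂ := ∑ j, ((h j : ℝ) : ℂ) • H j with hM
  have hMherm : Mᴴ = M := by
    rw [hM, Matrix.conjTranspose_sum]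
    refine Finset.sum_congr rfl fun j _ => ?_
    rw [Matrix.conjTranspose_smul, hHerm j, Complex.star_def, Complex.conj_ofReal]
  set Z : Matrix (Fin n) (Fin n) ℂ := (-Complex.I * (t : ℂ)) • M with hZ
  have hZskew : Zᴴ = -Z := by
    refine skew_of_herm M hMherm _ ?_
    rw [Complex.star_def]
    simp only [_root_.map_mul, map_neg, Complex.conj_I, Complex.conj_ofReal]
    ring
  set V : Matrix (Fin n) (Fin n) ℂ := NormedSpace.exp Z with hV
  set E := qDrift H h t with hE
  set ε : ℝ := 4 * (lam * t) ^ 2 * Real.exp (2 * (lam * t)) with hε_def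
  have hε : 0 ≤ ε := by positivity
  have hstep : ∀ B, ‖E B - V * B * Vᴴ‖ ≤ ε * ‖B‖ := by
    intro B
    have := step_bound hn hL H hHerm hHnorm h hh t ht B
    calc ‖E B - V * B * Vᴴ‖ ≤ 4 * (lam * t) ^ 2 * Real.exp (2 * (lam * t)) * ‖B‖ := this
      _ = ε * ‖B‖ := by rw [hε_def]
  have hV1 : ‖V‖ ≤ 1 := le_of_eq (norm_expSkew hn Z hZskew)
  have hW1 : ‖Vᴴ‖ ≤ 1 := by
    rw [expSkew_conjTranspose Z hZskew]
    have : (-Z)ᴴ = -(-Z) := by rw [Matrix.conjTranspose_neg, hZskew, neg_neg]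
    exact le_of_eq (norm_expSkew hn (-Z) this)
  have hcontr : ∀ B, ‖E B‖ ≤ ‖B‖ := fun B => qDrift_contract hn hL H hHerm h hh t B
  have key := iterate_bound E V Vᴴ hε hstep hcontr hV1 hW1 N ρ
  -- identify the powers
  have hNne : (N : ℂ) ≠ 0 := by exact_mod_cast hN.ne'
  have hpow : V ^ N = NormedSpace.exp ((-Complex.I * (T : ℂ)) • M) := by
    have hsc : ((N : ℂ)) * (-Complex.I * ((t : ℝ) : ℂ)) = -Complex.I * (T : ℂ) := by
      rw [ht_def]
      push_cast
      field_simp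
    rw [hV, ← Matrix.exp_nsmul, hZ, ← Nat.cast_smul_eq_nsmul ℂ, smul_smul, hsc]
  have hpowH : (Vᴴ) ^ N = NormedSpace.exp ((Complex.I * (T : ℂ)) • M) := by
    rw [← Matrix.conjTranspose_pow, hpow]
    rw [expSkew_conjTranspose]
    · congr 1
      rw [← neg_smul]
      congr 1
      ring
    · refine skew_of_herm M hMherm _ ?_
      rw [Complex.star_def]
      simp only [_root_.map_mul, map_neg, Complex.conj_I, Complex.conj_ofReal]
      ring
  rw [hpow, hpowH] at key
  refine le_trans key (le_of_eq ?_)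
  rw [hε_def, ht_def]
  have hNR : (N : ℝ) ≠ 0 := by exact_mod_cast hN.ne'
  field_simp
end

section
/- For every integer m ≥ 1 and every j with 1 ≤ j ≤ m, one has y_m ≥ m² and y_j ≤ 16·m²·y_m; that is, max_j y_j / y_m = O(m²). -/
set_option maxHeartbeats 1000000


/-- The well-conditioned Richardson nodes `y_j = ⌈R/√x_j⌉²` with `R = √8·m/π` and
`x_j = sin²(π(2j−1)/(8m))` satisfy `y_m ≥ m²` and `y_j ≤ 16·m²·y_m` for all
`1 ≤ j ≤ m`; that is, `max_j y_j / y_m = O(m²)`. -/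
theorem richardson_node_ratio_bound (m j : ℕ) (hm : 1 ≤ m) (hj1 : 1 ≤ j) (hjm : j ≤ m) :
    m ^ 2 ≤ (⌈(Real.sqrt 8 * m / Real.pi) /
        Real.sqrt (Real.sin (Real.pi * (2 * (m : ℝ) - 1) / (8 * m)) ^ 2)⌉₊) ^ 2 ∧
      (⌈(Real.sqrt 8 * m / Real.pi) /
          Real.sqrt (Real.sin (Real.pi * (2 * (j : ℝ) - 1) / (8 * m)) ^ 2)⌉₊) ^ 2 ≤
        16 * m ^ 2 *
          (⌈(Real.sqrt 8 * m / Real.pi) /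
              Real.sqrt (Real.sin (Real.pi * (2 * (m : ℝ) - 1) / (8 * m)) ^ 2)⌉₊) ^ 2 := by
  have hm1 : (1:ℝ) ≤ (m:ℝ) := by exact_mod_cast hm
  have hj1' : (1:ℝ) ≤ (j:ℝ) := by exact_mod_cast hj1
  have hjm' : (j:ℝ) ≤ (m:ℝ) := by exact_mod_cast hjm
  have hmpos : (0:ℝ) < m := by linarith
  have hpi := Real.pi_pos
  have hpilt : Real.pi < 3.15 := Real.pi_lt_d2
  have hpigt : 3 < Real.pi := Real.pi_gt_three
  have hs2 : Real.sqrt 2 ^ 2 = 2 := Real.sq_sqrt (by norm_num)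
  have hs2nn : (0:ℝ) ≤ Real.sqrt 2 := Real.sqrt_nonneg 2
  have hs2lt : Real.sqrt 2 < 1.5 := by
    nlinarith [sq_nonneg (Real.sqrt 2 - 1.5)]
  have hs2gt : 1 < Real.sqrt 2 := by nlinarith
  have h8 : Real.sqrt 8 = 2 * Real.sqrt 2 := by
    rw [show (8:ℝ) = 2^2 * 2 by norm_num, Real.sqrt_mul (by positivity), Real.sqrt_sq]
    norm_num
  set R : ℝ := Real.sqrt 8 * m / Real.pi with hR
  have hRpos : 0 < R := by rw [hR, h8]; positivity
  set θm : ℝ := Real.pi * (2 * (m:ℝ) - 1) / (8 * m) with hθm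
  set θj : ℝ := Real.pi * (2 * (j:ℝ) - 1) / (8 * m) with hθj
  have hθjpos : 0 < θj := by
    apply div_pos (by nlinarith) (by positivity)
  have hθjm : θj ≤ θm := by
    apply div_le_div_of_nonneg_right _ (by positivity)
    nlinarith
  have hθmlt : θm < Real.pi / 4 := by
    rw [hθm, div_lt_div_iff₀ (by positivity) (by norm_num)]
    nlinarith
  have hθmpos : 0 < θm := lt_of_lt_of_le hθjpos hθjm
  have hsinm_pos : 0 < Real.sin θm :=
    Real.sin_pos_of_pos_of_lt_pi hθmpos (by linarith)
  have hsinj_pos : 0 < Real.sin θj :=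
    Real.sin_pos_of_pos_of_lt_pi hθjpos (by linarith)
  have hsqm : Real.sqrt (Real.sin θm ^ 2) = Real.sin θm := Real.sqrt_sq hsinm_pos.le
  have hsqj : Real.sqrt (Real.sin θj ^ 2) = Real.sin θj := Real.sqrt_sq hsinj_pos.le
  rw [hsqm, hsqj]
  -- upper bound on sin θm
  have hsinm_lt : Real.sin θm < Real.sqrt 2 / 2 := by
    have := Real.sin_lt_sin_of_lt_of_le_pi_div_two (x := θm) (y := Real.pi / 4)
      (by linarith) (by linarith) hθmlt
    rwa [Real.sin_pi_div_four] at this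
  -- lower bound on sin θj
  have hsinj_ge : 1 / (4 * (m:ℝ)) ≤ Real.sin θj := by
    have h1 : 2 / Real.pi * θj ≤ Real.sin θj :=
      Real.mul_le_sin hθjpos.le (by linarith)
    have h2 : 1 / (4 * (m:ℝ)) ≤ 2 / Real.pi * θj := by
      rw [hθj]
      rw [div_le_iff₀ (by positivity)]
      field_simp
      nlinarith [mul_nonneg (mul_pos hpi hmpos).le (by linarith : (0:ℝ) ≤ (j:ℝ) - 1)]
    linarith
  -- lower bound on x_m := R / sin θm
  have hxm_lb : 4 * (m:ℝ) / Real.pi ≤ R / Real.sin θm := by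
    have h1 : R / (Real.sqrt 2 / 2) ≤ R / Real.sin θm := by
      gcongr
    have h2 : R / (Real.sqrt 2 / 2) = 4 * (m:ℝ) / Real.pi := by
      rw [hR, h8]
      field_simp
      ring
    linarith
  have hxm_pos : 0 < R / Real.sin θm := div_pos hRpos hsinm_pos
  have hm_le_xm : (m:ℝ) ≤ R / Real.sin θm := by
    have : (m:ℝ) ≤ 4 * (m:ℝ) / Real.pi := by
      rw [le_div_iff₀ hpi]; nlinarith
    linarith
  have hkm : (m:ℝ) ≤ (⌈R / Real.sin θm⌉₊ : ℝ) := hm_le_xm.trans (Nat.le_ceil _)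
  have hkm' : m ≤ ⌈R / Real.sin θm⌉₊ := by exact_mod_cast hkm
  constructor
  · exact Nat.pow_le_pow_left hkm' 2
  · -- kj ≤ 4 * m * km
    have hxj_ub : R / Real.sin θj ≤ 4 * (m:ℝ) * R := by
      have h1 : R / Real.sin θj ≤ R / (1 / (4 * (m:ℝ))) := by
        gcongr
      have h2 : R / (1 / (4 * (m:ℝ))) = 4 * (m:ℝ) * R := by
        field_simp
      linarith
    have hkey : 4 * (m:ℝ) * R + 1 ≤ 4 * (m:ℝ) * (4 * (m:ℝ) / Real.pi) := by
      rw [hR, h8]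
      have h3 : 8 * Real.sqrt 2 * (m:ℝ)^2 + Real.pi ≤ 16 * (m:ℝ)^2 := by
        nlinarith
      have h4 : 4 * (m:ℝ) * (2 * Real.sqrt 2 * (m:ℝ) / Real.pi) + 1
          = (8 * Real.sqrt 2 * (m:ℝ)^2 + Real.pi) / Real.pi := by
        field_simp; ring
      rw [h4]
      rw [div_le_iff₀ hpi]
      calc 8 * Real.sqrt 2 * (m:ℝ)^2 + Real.pi ≤ 16 * (m:ℝ)^2 := h3
        _ = 4 * (m:ℝ) * (4 * (m:ℝ) / Real.pi) * Real.pi := by field_simp; ring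
    have hkj : (⌈R / Real.sin θj⌉₊ : ℝ) ≤ 4 * (m:ℝ) * (⌈R / Real.sin θm⌉₊ : ℝ) := by
      have h1 : (⌈R / Real.sin θj⌉₊ : ℝ) < R / Real.sin θj + 1 :=
        Nat.ceil_lt_add_one (by positivity)
      have h2 : 4 * (m:ℝ) * (4 * (m:ℝ) / Real.pi) ≤ 4 * (m:ℝ) * (⌈R / Real.sin θm⌉₊ : ℝ) := by
        gcongr
        exact hxm_lb.trans (Nat.le_ceil _)
      linarith
    have hkjn : ⌈R / Real.sin θj⌉₊ ≤ 4 * m * ⌈R / Real.sin θm⌉₊ := by exact_mod_cast hkj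
    calc ⌈R / Real.sin θj⌉₊ ^ 2 ≤ (4 * m * ⌈R / Real.sin θm⌉₊) ^ 2 :=
          Nat.pow_le_pow_left hkjn 2
      _ = 16 * m ^ 2 * ⌈R / Real.sin θm⌉₊ ^ 2 := by ring
end
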